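/- arXiv:2103.11073 — 2 statements merged into one kernel-verified Lean document; each statement's English description precedes it below -/
import Mathlib

section
/- For all positive reals x, y, τ, x̄, ȳ, τ̄, the inequality τ·ln(1 + 1/(xy)) ≥ 2τ̄·ln(1 + 1/(x̄ȳ)) + (τ̄/(1 + x̄ȳ))·(2 − x/x̄ − y/ȳ) − (τ̄²·ln(1 + 1/(x̄ȳ)))/τ holds. -/
open Real Set

private lemma L_pos' {t : ℝ} (ht : 0 < t) : 0 < Real.log (1 + 1 / t) :=
  Real.log_pos (by nlinarith [one_div_pos.mpr ht])

private lemma L_lb {t : ℝ} (ht : 0 < t) : 1 / (1 + t) ≤ Real.log (1 + 1 / t) := by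
  have h1 : (0:ℝ) < 1 + t := by linarith
  have h2 : Real.log (t / (1 + t)) ≤ t / (1 + t) - 1 :=
    Real.log_le_sub_one_of_pos (by positivity)
  have h3 : Real.log (t / (1 + t)) = - Real.log (1 + 1 / t) := by
    have he : (1 + 1 / t) = (t / (1 + t))⁻¹ := by
      field_simp
      ring
    rw [he, Real.log_inv, neg_neg]
  have h4 : t / (1 + t) - 1 = -(1 / (1 + t)) := by field_simp; ring
  rw [h3, h4] at h2
  linarith

private lemma hasDerivAt_L {t : ℝ} (ht : 0 < t) :
    HasDerivAt (fun s : ℝ => Real.log (1 + 1 / s)) (-(1 / (t * (1 + t)))) t := by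
  have h1 : (0:ℝ) < 1 + 1 / t := by positivity
  have hinner : HasDerivAt (fun s : ℝ => 1 + 1 / s) (-(1/t^2)) t := by
    simpa [one_div] using (hasDerivAt_inv ht.ne').const_add 1
  have := hinner.log h1.ne'
  convert this using 1
  field_simp
  ring

private lemma hasDerivAt_M {t : ℝ} (ht : 0 < t) :
    HasDerivAt (fun s : ℝ => s * (1 + s) ^ 2 * Real.log (1 + 1 / s))
      (((1 + t) ^ 2 + t * (2 * (1 + t))) * Real.log (1 + 1 / t)
        + t * (1 + t) ^ 2 * (-(1 / (t * (1 + t))))) t := by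
  have hpoly : HasDerivAt (fun s : ℝ => s * (1 + s) ^ 2)
      ((1 + t) ^ 2 + t * (2 * (1 + t))) t := by
    have h1 : HasDerivAt (fun s : ℝ => (1 + s) ^ 2) (2 * (1 + t)) t := by
      have := ((hasDerivAt_id t).const_add 1).pow 2
      simp at this; exact this
    have : HasDerivAt (fun s : ℝ => s * (1 + s) ^ 2) (1 * (1 + t) ^ 2 + id t * (2 * (1 + t))) t :=
      (hasDerivAt_id t).mul h1
    convert this using 1
    simp only [id]
    ring
  exact hpoly.mul (hasDerivAt_L ht)

private lemma M_mono :
    MonotoneOn (fun s : ℝ => s * (1 + s) ^ 2 * Real.log (1 + 1 / s)) (Set.Ioi 0) := by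
  have hint : interior (Set.Ioi (0:ℝ)) = Set.Ioi 0 := isOpen_Ioi.interior_eq
  apply monotoneOn_of_deriv_nonneg (convex_Ioi 0)
  · intro s hs
    exact ((hasDerivAt_M hs).continuousAt).continuousWithinAt
  · rw [hint]
    intro s hs
    exact (hasDerivAt_M hs).differentiableAt.differentiableWithinAt
  · rw [hint]
    intro s hs
    rw [(hasDerivAt_M hs).deriv]
    have hs' : (0:ℝ) < s := hs
    have hlb := L_lb hs'
    have h1 : (0:ℝ) < 1 + s := by linarith
    have h3 : s * (1 + s) ^ 2 * (-(1 / (s * (1 + s)))) = -(1 + s) := by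
      field_simp
    rw [h3]
    have h4 : ((1 + s) ^ 2 + s * (2 * (1 + s))) * (1 / (1 + s)) = 1 + 3 * s := by
      field_simp
      ring
    nlinarith [mul_le_mul_of_nonneg_left hlb (by positivity : (0:ℝ) ≤ (1 + s) ^ 2 + s * (2 * (1 + s)))]

private lemma hasDerivAt_H {b t : ℝ} (ht : 0 < t) :
    HasDerivAt (fun s : ℝ =>
        (1 + b) * Real.sqrt (Real.log (1 + 1 / b)) * Real.sqrt (Real.log (1 + 1 / s))
          + Real.sqrt s / Real.sqrt b)
      ((1 + b) * Real.sqrt (Real.log (1 + 1 / b))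
          * ((-(1 / (t * (1 + t)))) / (2 * Real.sqrt (Real.log (1 + 1 / t))))
        + (1 / (2 * Real.sqrt t)) / Real.sqrt b) t := by
  have h1 : HasDerivAt (fun s : ℝ => Real.sqrt (Real.log (1 + 1 / s)))
      ((-(1 / (t * (1 + t)))) / (2 * Real.sqrt (Real.log (1 + 1 / t)))) t :=
    (hasDerivAt_L ht).sqrt (L_pos' ht).ne'
  have h2 : HasDerivAt (fun s : ℝ => Real.sqrt s / Real.sqrt b)
      ((1 / (2 * Real.sqrt t)) / Real.sqrt b) t :=
    (Real.hasDerivAt_sqrt ht.ne').div_const _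
  exact (h1.const_mul _).add h2

private lemma cross_ineq {b t : ℝ} (hb : 0 < b) (ht : 0 < t)
    (hM : b * (1 + b) ^ 2 * Real.log (1 + 1 / b) ≤ t * (1 + t) ^ 2 * Real.log (1 + 1 / t)) :
    (1 + b) * Real.sqrt (Real.log (1 + 1 / b)) * Real.sqrt t * Real.sqrt b
      ≤ t * (1 + t) * Real.sqrt (Real.log (1 + 1 / t)) := by
  have hp : (0:ℝ) < Real.sqrt (Real.log (1 + 1 / t)) := Real.sqrt_pos.mpr (L_pos' ht)
  have hq : (0:ℝ) < Real.sqrt (Real.log (1 + 1 / b)) := Real.sqrt_pos.mpr (L_pos' hb)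
  have hu : (0:ℝ) < Real.sqrt t := Real.sqrt_pos.mpr ht
  have hv : (0:ℝ) < Real.sqrt b := Real.sqrt_pos.mpr hb
  have hp2 : Real.sqrt (Real.log (1 + 1 / t)) ^ 2 = Real.log (1 + 1 / t) :=
    Real.sq_sqrt (L_pos' ht).le
  have hq2 : Real.sqrt (Real.log (1 + 1 / b)) ^ 2 = Real.log (1 + 1 / b) :=
    Real.sq_sqrt (L_pos' hb).le
  have hu2 : Real.sqrt t ^ 2 = t := Real.sq_sqrt ht.le
  have hv2 : Real.sqrt b ^ 2 = b := Real.sq_sqrt hb.le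
  have hsq : ((1 + b) * Real.sqrt (Real.log (1 + 1 / b)) * Real.sqrt t * Real.sqrt b) ^ 2
      ≤ (t * (1 + t) * Real.sqrt (Real.log (1 + 1 / t))) ^ 2 := by
    have e1 : ((1 + b) * Real.sqrt (Real.log (1 + 1 / b)) * Real.sqrt t * Real.sqrt b) ^ 2
        = (b * (1 + b) ^ 2 * Real.log (1 + 1 / b)) * t := by
      rw [show ((1 + b) * Real.sqrt (Real.log (1 + 1 / b)) * Real.sqrt t * Real.sqrt b) ^ 2
          = (1 + b) ^ 2 * Real.sqrt (Real.log (1 + 1 / b)) ^ 2 * Real.sqrt t ^ 2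
            * Real.sqrt b ^ 2 by ring, hq2, hu2, hv2]
      ring
    have e2 : (t * (1 + t) * Real.sqrt (Real.log (1 + 1 / t))) ^ 2
        = (t * (1 + t) ^ 2 * Real.log (1 + 1 / t)) * t := by
      rw [show (t * (1 + t) * Real.sqrt (Real.log (1 + 1 / t))) ^ 2
          = t ^ 2 * (1 + t) ^ 2 * Real.sqrt (Real.log (1 + 1 / t)) ^ 2 by ring, hp2]
      ring
    rw [e1, e2]
    exact mul_le_mul_of_nonneg_right hM ht.le
  nlinarith [hsq, mul_pos (mul_pos (mul_pos (by linarith : (0:ℝ) < 1 + b) hq) hu) hv,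
    mul_pos (mul_pos (mul_pos ht (by linarith : (0:ℝ) < 1 + t)) hp) (by norm_num : (0:ℝ) < 1)]

private lemma Hderiv_eq {b t : ℝ} (hb : 0 < b) (ht : 0 < t) :
    (1 + b) * Real.sqrt (Real.log (1 + 1 / b))
        * ((-(1 / (t * (1 + t)))) / (2 * Real.sqrt (Real.log (1 + 1 / t))))
      + (1 / (2 * Real.sqrt t)) / Real.sqrt b
    = (t * (1 + t) * Real.sqrt (Real.log (1 + 1 / t))
        - (1 + b) * Real.sqrt (Real.log (1 + 1 / b)) * Real.sqrt t * Real.sqrt b)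
      / (2 * t * (1 + t) * Real.sqrt (Real.log (1 + 1 / t)) * Real.sqrt t * Real.sqrt b) := by
  have hp : (0:ℝ) < Real.sqrt (Real.log (1 + 1 / t)) := Real.sqrt_pos.mpr (L_pos' ht)
  have hq : (0:ℝ) < Real.sqrt (Real.log (1 + 1 / b)) := Real.sqrt_pos.mpr (L_pos' hb)
  have hu : (0:ℝ) < Real.sqrt t := Real.sqrt_pos.mpr ht
  have hv : (0:ℝ) < Real.sqrt b := Real.sqrt_pos.mpr hb
  have h1 : (0:ℝ) < 1 + t := by linarith
  set p := Real.sqrt (Real.log (1 + 1 / t))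
  set q := Real.sqrt (Real.log (1 + 1 / b))
  set u := Real.sqrt t
  set v := Real.sqrt b
  field_simp
  ring

private lemma key_H {a b : ℝ} (ha : 0 < a) (hb : 0 < b) :
    (1 + b) * Real.log (1 + 1 / b) + 1
      ≤ (1 + b) * Real.sqrt (Real.log (1 + 1 / b)) * Real.sqrt (Real.log (1 + 1 / a))
        + Real.sqrt a / Real.sqrt b := by
  set H : ℝ → ℝ := fun s =>
    (1 + b) * Real.sqrt (Real.log (1 + 1 / b)) * Real.sqrt (Real.log (1 + 1 / s))
      + Real.sqrt s / Real.sqrt b with hHdef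
  have hHb : H b = (1 + b) * Real.log (1 + 1 / b) + 1 := by
    simp only [hHdef]
    rw [mul_assoc, Real.mul_self_sqrt (L_pos' hb).le,
      div_self (Real.sqrt_pos.mpr hb).ne']
  have goal_eq : H a = (1 + b) * Real.sqrt (Real.log (1 + 1 / b))
      * Real.sqrt (Real.log (1 + 1 / a)) + Real.sqrt a / Real.sqrt b := rfl
  rw [← goal_eq, ← hHb]
  rcases le_total b a with hba | hab
  · -- monotone on [b, ∞)
    have hmono : MonotoneOn H (Set.Ici b) := by
      apply monotoneOn_of_deriv_nonneg (convex_Ici b)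
      · intro s hs
        have hs0 : 0 < s := lt_of_lt_of_le hb hs
        exact (hasDerivAt_H hs0).continuousAt.continuousWithinAt
      · rw [interior_Ici]
        intro s hs
        have hs0 : 0 < s := hb.trans hs
        exact (hasDerivAt_H hs0).differentiableAt.differentiableWithinAt
      · rw [interior_Ici]
        intro s hs
        have hsb : b < s := hs
        have hs0 : 0 < s := hb.trans hsb
        rw [(hasDerivAt_H hs0).deriv, Hderiv_eq hb hs0]
        apply div_nonneg
        · have hM : b * (1 + b) ^ 2 * Real.log (1 + 1 / b)
              ≤ s * (1 + s) ^ 2 * Real.log (1 + 1 / s) := by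
            simpa using M_mono (Set.mem_Ioi.mpr hb) (Set.mem_Ioi.mpr hs0) hsb.le
          have := cross_ineq hb hs0 hM
          linarith
        · positivity
    exact hmono Set.self_mem_Ici (Set.mem_Ici.mpr hba) hba
  · -- antitone on [a, b]
    have hanti : AntitoneOn H (Set.Icc a b) := by
      apply antitoneOn_of_deriv_nonpos (convex_Icc a b)
      · intro s hs
        have hs0 : 0 < s := lt_of_lt_of_le ha hs.1
        exact (hasDerivAt_H hs0).continuousAt.continuousWithinAt
      · rw [interior_Icc]
        intro s hs
        have hs0 : 0 < s := ha.trans hs.1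
        exact (hasDerivAt_H hs0).differentiableAt.differentiableWithinAt
      · rw [interior_Icc]
        intro s hs
        have hs0 : 0 < s := ha.trans hs.1
        rw [(hasDerivAt_H hs0).deriv, Hderiv_eq hb hs0]
        apply div_nonpos_of_nonpos_of_nonneg
        · have hM : s * (1 + s) ^ 2 * Real.log (1 + 1 / s)
              ≤ b * (1 + b) ^ 2 * Real.log (1 + 1 / b) := by
            simpa using M_mono (Set.mem_Ioi.mpr hs0) (Set.mem_Ioi.mpr hb) hs.2.le
          have hswap := cross_ineq hs0 hb hM
          -- hswap : (1+s)*√(Ls)*√b*√s ≤ b*(1+b)*√(Lb)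
          have hu2 : Real.sqrt s ^ 2 = s := Real.sq_sqrt hs0.le
          have hv2 : Real.sqrt b ^ 2 = b := Real.sq_sqrt hb.le
          have hu : (0:ℝ) < Real.sqrt s := Real.sqrt_pos.mpr hs0
          have hv : (0:ℝ) < Real.sqrt b := Real.sqrt_pos.mpr hb
          have h2 := mul_le_mul_of_nonneg_right hswap hu.le
          rw [sub_nonpos]
          have hss : Real.sqrt s * Real.sqrt s = s := Real.mul_self_sqrt hs0.le
          have hbb : Real.sqrt b * Real.sqrt b = b := Real.mul_self_sqrt hb.le
          have e1 : s * ((1 + s) * Real.sqrt (Real.log (1 + 1 / s)) * Real.sqrt b)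
              = (1 + s) * Real.sqrt (Real.log (1 + 1 / s)) * Real.sqrt b * Real.sqrt s
                * Real.sqrt s := by
            linear_combination
              (-((1 + s) * Real.sqrt (Real.log (1 + 1 / s)) * Real.sqrt b)) * hss
          have e2 : ((1 + b) * Real.sqrt (Real.log (1 + 1 / b)) * Real.sqrt s * Real.sqrt b)
              * Real.sqrt b
              = b * (1 + b) * Real.sqrt (Real.log (1 + 1 / b)) * Real.sqrt s := by
            linear_combination ((1 + b) * Real.sqrt (Real.log (1 + 1 / b)) * Real.sqrt s) * hbb
          have h3 : (s * (1 + s) * Real.sqrt (Real.log (1 + 1 / s))) * Real.sqrt b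
              ≤ ((1 + b) * Real.sqrt (Real.log (1 + 1 / b)) * Real.sqrt s * Real.sqrt b)
                * Real.sqrt b := by
            rw [e2]
            calc (s * (1 + s) * Real.sqrt (Real.log (1 + 1 / s))) * Real.sqrt b
                = s * ((1 + s) * Real.sqrt (Real.log (1 + 1 / s)) * Real.sqrt b) := by ring
              _ = (1 + s) * Real.sqrt (Real.log (1 + 1 / s)) * Real.sqrt b * Real.sqrt s
                  * Real.sqrt s := e1
              _ ≤ b * (1 + b) * Real.sqrt (Real.log (1 + 1 / b)) * Real.sqrt s := h2
          exact le_of_mul_le_mul_right h3 hv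
        · positivity
    exact hanti (Set.left_mem_Icc.mpr hab) (Set.right_mem_Icc.mpr hab) hab

private lemma amgm {x y xb yb : ℝ} (hx : 0 < x) (hy : 0 < y) (hxb : 0 < xb) (hyb : 0 < yb) :
    2 * (Real.sqrt (x * y) / Real.sqrt (xb * yb)) ≤ x / xb + y / yb := by
  have hp2 : Real.sqrt (x / xb) ^ 2 = x / xb := Real.sq_sqrt (by positivity)
  have hq2 : Real.sqrt (y / yb) ^ 2 = y / yb := Real.sq_sqrt (by positivity)
  have hpq : Real.sqrt (x / xb) * Real.sqrt (y / yb)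
      = Real.sqrt (x * y) / Real.sqrt (xb * yb) := by
    rw [← Real.sqrt_mul (by positivity), ← Real.sqrt_div (by positivity)]
    congr 1
    field_simp
  nlinarith [sq_nonneg (Real.sqrt (x / xb) - Real.sqrt (y / yb)), hp2, hq2, hpq]

theorem sca_inequality (x y τ xb yb τb : ℝ)
    (hx : 0 < x) (hy : 0 < y) (hτ : 0 < τ)
    (hxb : 0 < xb) (hyb : 0 < yb) (hτb : 0 < τb) :
    τ * Real.log (1 + 1 / (x * y)) ≥
      2 * τb * Real.log (1 + 1 / (xb * yb))
        + (τb / (1 + xb * yb)) * (2 - x / xb - y / yb)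
        - (τb ^ 2 * Real.log (1 + 1 / (xb * yb))) / τ := by
  have hz : 0 < x * y := mul_pos hx hy
  have hzb : 0 < xb * yb := mul_pos hxb hyb
  have hc : (0:ℝ) < 1 + xb * yb := by linarith
  have hL : 0 < Real.log (1 + 1 / (x * y)) := L_pos' hz
  have hLb : 0 < Real.log (1 + 1 / (xb * yb)) := L_pos' hzb
  have hsL2 : Real.sqrt (Real.log (1 + 1 / (x * y))) ^ 2 = Real.log (1 + 1 / (x * y)) :=
    Real.sq_sqrt hL.le
  have hsLb2 : Real.sqrt (Real.log (1 + 1 / (xb * yb))) ^ 2 = Real.log (1 + 1 / (xb * yb)) :=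
    Real.sq_sqrt hLb.le
  have hkey := key_H hz hzb
  have hamgm := amgm hx hy hxb hyb
  -- Step C : 2 Lb (1+zb) + (2 - x/xb - y/yb) ≤ 2 sL sLb (1+zb)
  have hC : 2 - x / xb - y / yb
      ≤ 2 * (Real.sqrt (Real.log (1 + 1 / (x * y)))
          * Real.sqrt (Real.log (1 + 1 / (xb * yb)))) * (1 + xb * yb)
        - 2 * Real.log (1 + 1 / (xb * yb)) * (1 + xb * yb) := by
    nlinarith [hkey, hamgm]
  -- quadratic step
  have hquad : 2 * (τ * τb) * (Real.sqrt (Real.log (1 + 1 / (x * y)))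
        * Real.sqrt (Real.log (1 + 1 / (xb * yb))))
      ≤ τ ^ 2 * Real.log (1 + 1 / (x * y)) + τb ^ 2 * Real.log (1 + 1 / (xb * yb)) := by
    nlinarith [sq_nonneg (Real.sqrt (Real.log (1 + 1 / (x * y))) * τ
      - Real.sqrt (Real.log (1 + 1 / (xb * yb))) * τb), hsL2, hsLb2]
  rw [ge_iff_le, ← sub_nonneg]
  have expand : τ * Real.log (1 + 1 / (x * y))
      - (2 * τb * Real.log (1 + 1 / (xb * yb))
        + (τb / (1 + xb * yb)) * (2 - x / xb - y / yb)
        - (τb ^ 2 * Real.log (1 + 1 / (xb * yb))) / τ)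
      = (τ ^ 2 * Real.log (1 + 1 / (x * y)) * (1 + xb * yb)
          + τb ^ 2 * Real.log (1 + 1 / (xb * yb)) * (1 + xb * yb)
          - 2 * τb * τ * Real.log (1 + 1 / (xb * yb)) * (1 + xb * yb)
          - τ * τb * (2 - x / xb - y / yb)) / (τ * (1 + xb * yb)) := by
    field_simp
    ring
  rw [expand]
  apply div_nonneg _ (by positivity)
  have h5 : τ * τb * (2 - x / xb - y / yb)
      ≤ τ * τb * (2 * (Real.sqrt (Real.log (1 + 1 / (x * y)))
          * Real.sqrt (Real.log (1 + 1 / (xb * yb)))) * (1 + xb * yb)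
        - 2 * Real.log (1 + 1 / (xb * yb)) * (1 + xb * yb)) :=
    mul_le_mul_of_nonneg_left hC (by positivity)
  have h6 : 2 * (τ * τb) * (Real.sqrt (Real.log (1 + 1 / (x * y)))
        * Real.sqrt (Real.log (1 + 1 / (xb * yb)))) * (1 + xb * yb)
      ≤ (τ ^ 2 * Real.log (1 + 1 / (x * y)) + τb ^ 2 * Real.log (1 + 1 / (xb * yb)))
        * (1 + xb * yb) :=
    mul_le_mul_of_nonneg_right hquad hc.le
  nlinarith [h5, h6]
end

section
/- For positive reals p, g₀, b, u, p̄, b̄, ū, define λ = 2b̄·ln(1 + p̄g₀/(b̄ū)), μ = b̄/(1 + b̄ū/(p̄g₀)), ν = b̄²·ln(1 + p̄g₀/(b̄ū)). Then b·log₂(1 + p·g₀/(b·u)) ≥ (1/ln 2)·(λ + μ·(2 − (u/p)·(p̄/ū) − b/b̄) − ν/b). -/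
open intervalIntegral MeasureTheory Set

lemma key_tangent (x w y v : ℝ) (hx : 0 < x) (hw : 0 < w) (hy : 0 < y) (hv : 0 < v) :
    w⁻¹ * (Real.log (x + w) - Real.log x) ≥
      (2 / v - w / v ^ 2) * (Real.log (y + v) - Real.log y)
        + (x - w * y / v) * ((v * (y + v))⁻¹ - (v * y)⁻¹) := by
  have hposx : ∀ t ∈ Set.uIcc (0:ℝ) 1, 0 < x + t * w := by
    intro t ht
    rw [Set.uIcc_of_le (by norm_num : (0:ℝ) ≤ 1)] at ht
    nlinarith [ht.1, hw.le]
  have hposy : ∀ t ∈ Set.uIcc (0:ℝ) 1, 0 < y + t * v := by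
    intro t ht
    rw [Set.uIcc_of_le (by norm_num : (0:ℝ) ≤ 1)] at ht
    nlinarith [ht.1, hv.le]
  have hcx : ContinuousOn (fun t : ℝ => (x + t * w)⁻¹) (Set.uIcc 0 1) :=
    ContinuousOn.inv₀ ((continuous_const.add (continuous_id.mul continuous_const)).continuousOn)
      (fun t ht => (hposx t ht).ne')
  have hcy : ContinuousOn (fun t : ℝ => (y + t * v)⁻¹) (Set.uIcc 0 1) :=
    ContinuousOn.inv₀ ((continuous_const.add (continuous_id.mul continuous_const)).continuousOn)
      (fun t ht => (hposy t ht).ne')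
  have hcR : ContinuousOn
      (fun t : ℝ => 2 * (y + t * v)⁻¹ - (x + t * w) * ((y + t * v)⁻¹) ^ 2) (Set.uIcc 0 1) := by
    apply ContinuousOn.sub (ContinuousOn.mul continuousOn_const hcy)
    exact ContinuousOn.mul
      ((continuous_const.add (continuous_id.mul continuous_const)).continuousOn) (hcy.pow 2)
  -- LHS integral
  have hL : ∫ t in (0:ℝ)..1, (x + t * w)⁻¹ = w⁻¹ * (Real.log (x + w) - Real.log x) := by
    have hder : ∀ t ∈ Set.uIcc (0:ℝ) 1,
        HasDerivAt (fun t => w⁻¹ * Real.log (x + t * w)) ((x + t * w)⁻¹) t := by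
      intro t ht
      have h1 : HasDerivAt (fun t : ℝ => x + t * w) w t := by
        simpa using ((hasDerivAt_id t).mul_const w).const_add x
      have h3 := (h1.log (hposx t ht).ne').const_mul w⁻¹
      convert h3 using 1
      · rfl
      · rfl
      field_simp
    rw [intervalIntegral.integral_eq_sub_of_hasDerivAt hder (hcx.intervalIntegrable)]
    norm_num
    ring
  -- RHS integral
  have hR : ∫ t in (0:ℝ)..1, (2 * (y + t * v)⁻¹ - (x + t * w) * ((y + t * v)⁻¹) ^ 2)
      = (2 / v - w / v ^ 2) * (Real.log (y + v) - Real.log y)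
        + (x - w * y / v) * ((v * (y + v))⁻¹ - (v * y)⁻¹) := by
    have hder : ∀ t ∈ Set.uIcc (0:ℝ) 1,
        HasDerivAt (fun t => (2 / v - w / v ^ 2) * Real.log (y + t * v)
            + (x - w * y / v) * (v * (y + t * v))⁻¹)
          (2 * (y + t * v)⁻¹ - (x + t * w) * ((y + t * v)⁻¹) ^ 2) t := by
      intro t ht
      have hyt := hposy t ht
      have h1 : HasDerivAt (fun t : ℝ => y + t * v) v t := by
        simpa using ((hasDerivAt_id t).mul_const v).const_add y
      have h2 := (h1.log hyt.ne').const_mul (2 / v - w / v ^ 2)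
      have h3 : HasDerivAt (fun t : ℝ => v * (y + t * v)) (v * v) t := h1.const_mul v
      have h4 := (h3.inv (by positivity)).const_mul (x - w * y / v)
      have h5 := h2.add h4
      convert h5 using 1
      · rfl
      · rfl
      · rfl
      field_simp
      ring
    rw [intervalIntegral.integral_eq_sub_of_hasDerivAt hder (hcR.intervalIntegrable)]
    norm_num
    field_simp
    ring
  rw [← hL, ← hR, ge_iff_le]
  apply intervalIntegral.integral_mono_on (by norm_num) (hcR.intervalIntegrable)
    (hcx.intervalIntegrable)
  intro t ht
  have ht' : t ∈ Set.uIcc (0:ℝ) 1 := by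
    rw [Set.uIcc_of_le (by norm_num : (0:ℝ) ≤ 1)]; exact ht
  have ha := hposx t ht'
  have hc := hposy t ht'
  set a := x + t * w
  set c := y + t * v
  have hkey : a⁻¹ - (2 * c⁻¹ - a * (c⁻¹) ^ 2) = (a - c) ^ 2 * a⁻¹ * (c⁻¹) ^ 2 := by
    field_simp
    ring
  nlinarith [mul_nonneg (mul_nonneg (sq_nonneg (a - c)) (inv_pos.mpr ha).le) (sq_nonneg c⁻¹)]

theorem rate_sca_bound (p g₀ b u pb bb ub : ℝ)
    (hp : 0 < p) (hg : 0 < g₀) (hb : 0 < b) (hu : 0 < u)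
    (hpb : 0 < pb) (hbb : 0 < bb) (hub : 0 < ub) :
    b * Real.logb 2 (1 + p * g₀ / (b * u)) ≥
      (1 / Real.log 2) *
        ((2 * bb * Real.log (1 + pb * g₀ / (bb * ub)))
          + (bb / (1 + bb * ub / (pb * g₀))) * (2 - (u / p) * (pb / ub) - b / bb)
          - (bb ^ 2 * Real.log (1 + pb * g₀ / (bb * ub))) / b) := by
  set x : ℝ := u / (p * g₀) with hxdef
  set w : ℝ := b⁻¹ with hwdef
  set y : ℝ := ub / (pb * g₀) with hydef
  set v : ℝ := bb⁻¹ with hvdef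
  have hx : 0 < x := by positivity
  have hw : 0 < w := by positivity
  have hy : 0 < y := by positivity
  have hv : 0 < v := by positivity
  have key := key_tangent x w y v hx hw hy hv
  -- identify the logs
  have hlog1 : Real.log (1 + p * g₀ / (b * u)) = Real.log (x + w) - Real.log x := by
    rw [← Real.log_div (by positivity) hx.ne']
    congr 1
    rw [hxdef, hwdef]
    field_simp
  have hlog2 : Real.log (1 + pb * g₀ / (bb * ub)) = Real.log (y + v) - Real.log y := by
    rw [← Real.log_div (by positivity) hy.ne']
    congr 1
    rw [hydef, hvdef]
    field_simp
  set L : ℝ := Real.log (y + v) - Real.log y with hLdef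
  -- reduce logb to log
  have hlb : b * Real.logb 2 (1 + p * g₀ / (b * u))
      = (1 / Real.log 2) * (w⁻¹ * (Real.log (x + w) - Real.log x)) := by
    rw [Real.logb, hlog1, hwdef]
    field_simp
  rw [hlb, ge_iff_le]
  apply mul_le_mul_of_nonneg_left _ (by positivity : (0:ℝ) ≤ 1 / Real.log 2)
  refine le_trans ?_ key
  rw [hlog2]
  -- log coefficients agree; remaining rational inequality
  have hcoef : 2 * bb * L - bb ^ 2 * L / b = (2 / v - w / v ^ 2) * L := by
    rw [hvdef, hwdef]
    field_simp
  have hrat : (bb / (1 + bb * ub / (pb * g₀))) * (2 - (u / p) * (pb / ub) - b / bb)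
      ≤ (x - w * y / v) * ((v * (y + v))⁻¹ - (v * y)⁻¹) := by
    rw [← sub_nonneg]
    have hexp : (x - w * y / v) * ((v * (y + v))⁻¹ - (v * y)⁻¹)
        - (bb / (1 + bb * ub / (pb * g₀))) * (2 - (u / p) * (pb / ub) - b / bb)
        = (bb * pb * g₀ / (pb * g₀ + bb * ub)) * (b - bb) ^ 2 / (b * bb) := by
      rw [hxdef, hwdef, hydef, hvdef]
      field_simp
      ring
    rw [hexp]
    positivity
  calc 2 * bb * L + (bb / (1 + bb * ub / (pb * g₀))) * (2 - (u / p) * (pb / ub) - b / bb)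
        - bb ^ 2 * L / b
      ≤ 2 * bb * L + (x - w * y / v) * ((v * (y + v))⁻¹ - (v * y)⁻¹) - bb ^ 2 * L / b := by
        linarith
    _ = (2 / v - w / v ^ 2) * L + (x - w * y / v) * ((v * (y + v))⁻¹ - (v * y)⁻¹) := by
        rw [← hcoef]; ring
end
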